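/- A ring R is semi-boolean (i.e., R/J(R) is Boolean and idempotents lift modulo J(R)) if and only if R is potent and R/J(R) is UUSC. -/
import Mathlib

/-- An element `a` of a ring is *uniquely strongly clean* if there is exactly one
idempotent `e` such that `a - e` is a unit and `a * e = e * a`. -/
def IsUSCleanElem {R : Type*} [Ring R] (a : R) : Prop :=
  ∃! e : R, IsIdempotentElem e ∧ IsUnit (a - e) ∧ a * e = e * a

/-- An element `a` of a ring is *uniquely clean* if there is exactly one
idempotent `e` such that `a - e` is a unit. -/
def IsUCleanElem {R : Type*} [Ring R] (a : R) : Prop :=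
  ∃! e : R, IsIdempotentElem e ∧ IsUnit (a - e)

/-- An element `a` of a ring is *clean* if it is the sum of an idempotent and a unit. -/
def IsCleanElem {R : Type*} [Ring R] (a : R) : Prop :=
  ∃ e : R, IsIdempotentElem e ∧ IsUnit (a - e)

/-- A ring is *CUSC* if every clean element is uniquely strongly clean. -/
def IsCUSC (R : Type*) [Ring R] : Prop := ∀ a : R, IsCleanElem a → IsUSCleanElem a

/-- A ring is *UUSC* if every unit is uniquely strongly clean. -/
def IsUUSC (R : Type*) [Ring R] : Prop := ∀ a : R, IsUnit a → IsUSCleanElem a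

/-- A ring is *CUC* if every clean element is uniquely clean. -/
def IsCUC (R : Type*) [Ring R] : Prop := ∀ a : R, IsCleanElem a → IsUCleanElem a

/-- A ring is *UUC* if every unit is uniquely clean. -/
def IsUUC (R : Type*) [Ring R] : Prop := ∀ a : R, IsUnit a → IsUCleanElem a

/-- A ring is *USC* if every element is uniquely strongly clean. -/
def IsUSCRing (R : Type*) [Ring R] : Prop := ∀ a : R, IsUSCleanElem a

/-- A ring is *uniquely clean* (UC) if every element is uniquely clean. -/
def IsUCRing (R : Type*) [Ring R] : Prop := ∀ a : R, IsUCleanElem a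

/-- A ring is *clean* if every element is clean. -/
def IsCleanRing (R : Type*) [Ring R] : Prop := ∀ a : R, IsCleanElem a

/-- The Jacobson radical of a (possibly noncommutative) ring, as a two-sided ideal. -/
abbrev jacobsonRad (R : Type*) [Ring R] : TwoSidedIdeal R := TwoSidedIdeal.jacobson ⊥

/-- The quotient ring `R / J(R)` of a ring by its Jacobson radical. -/
abbrev JacQuot (R : Type*) [Ring R] := (jacobsonRad R).ringCon.Quotient

/-- A ring is *semi-potent* if every one-sided (left or right) ideal not contained in the
Jacobson radical contains a nonzero idempotent.  Left ideals are `Ideal R`, right ideals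
are `Rᵐᵒᵖ`-submodules of `R`. -/
def Semipotent (R : Type*) [Ring R] : Prop :=
  (∀ I : Ideal R, ¬ (I : Set R) ⊆ (jacobsonRad R : Set R) →
      ∃ e ∈ I, e ≠ 0 ∧ IsIdempotentElem e) ∧
  (∀ I : Submodule Rᵐᵒᵖ R, ¬ (I : Set R) ⊆ (jacobsonRad R : Set R) →
      ∃ e ∈ I, e ≠ 0 ∧ IsIdempotentElem e)

/-- Idempotents lift modulo the Jacobson radical: for every `a` with `a - a ^ 2 ∈ J(R)`
there is an idempotent `e` with `a - e ∈ J(R)`. -/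
def IdempotentsLiftJac (R : Type*) [Ring R] : Prop :=
  ∀ a : R, a - a ^ 2 ∈ jacobsonRad R → ∃ e : R, IsIdempotentElem e ∧ a - e ∈ jacobsonRad R

/-- A ring is *potent* if it is semi-potent and idempotents lift modulo the Jacobson radical. -/
def Potent (R : Type*) [Ring R] : Prop := Semipotent R ∧ IdempotentsLiftJac R

section Jac

variable {R : Type*} [Ring R]

lemma jac_left_inv {j : R} (hj : j ∈ jacobsonRad R) :
    ∃ z : R, z * (1 + j) = 1 := by
  obtain ⟨z, hz⟩ := TwoSidedIdeal.mem_jacobson_iff.mp hj 1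
  rw [TwoSidedIdeal.mem_bot] at hz
  rw [mul_one] at hz
  refine ⟨z, ?_⟩
  have h2 : z * j + z - 1 = 0 := hz
  calc z * (1 + j) = z * j + z - 1 + 1 := by noncomm_ring
  _ = 1 := by rw [h2, zero_add]

lemma jac_unit {j : R} (hj : j ∈ jacobsonRad R) : IsUnit (1 + j) := by
  obtain ⟨z, hz⟩ := jac_left_inv hj
  have hz' : z = 1 + -(z * j) := by
    have h1 : z * 1 + z * j = 1 := by rw [← mul_add]; exact hz
    rw [mul_one] at h1
    rw [← sub_eq_add_neg]
    exact eq_sub_of_add_eq h1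
  have hmem : -(z * j) ∈ jacobsonRad R :=
    TwoSidedIdeal.neg_mem _ (TwoSidedIdeal.mul_mem_left _ _ _ hj)
  obtain ⟨w, hw⟩ := jac_left_inv hmem
  rw [← hz'] at hw
  have hwj : (1 + j) = w := by
    calc (1 + j) = (w * z) * (1 + j) := by rw [hw, one_mul]
    _ = w * (z * (1 + j)) := by rw [mul_assoc]
    _ = w := by rw [hz, mul_one]
  refine ⟨⟨1 + j, z, ?_, hz⟩, rfl⟩
  rw [hwj]; exact hw

lemma jac_unit' {j : R} (hj : j ∈ jacobsonRad R) : IsUnit (1 - j) := by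
  have h := jac_unit (TwoSidedIdeal.neg_mem _ hj)
  rwa [← sub_eq_add_neg] at h

lemma jac_idem_zero {e : R} (he : e * e = e) (hj : e ∈ jacobsonRad R) : e = 0 := by
  obtain ⟨u, hu⟩ := jac_unit' hj
  have h1 : e * (1 - e) = 0 := by rw [mul_sub, mul_one, he, sub_self]
  have h2 : (1 - e) * ↑u⁻¹ = 1 := by rw [← hu]; exact u.mul_inv
  calc e = e * ((1 - e) * ↑u⁻¹) := by rw [h2, mul_one]
  _ = (e * (1 - e)) * ↑u⁻¹ := by rw [mul_assoc]
  _ = 0 := by rw [h1, zero_mul]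

lemma quot_zero_iff (a : R) : (a : JacQuot R) = 0 ↔ a ∈ jacobsonRad R := by
  constructor
  · intro h
    have h' : (a : JacQuot R) = ((0 : R) : JacQuot R) := h
    have := (jacobsonRad R).ringCon.eq.mp h'
    rw [TwoSidedIdeal.rel_iff] at this
    simpa using this
  · intro h
    have h' : (jacobsonRad R).ringCon a 0 := by
      rw [TwoSidedIdeal.rel_iff]; simpa using h
    exact (jacobsonRad R).ringCon.eq.mpr h'

end Jac

section Core

variable {S : Type*} [Ring S]

lemma uusc_hA (h : IsUUSC S) :
    ∀ v g : S, IsUnit v → g * g = g → v * g = g * v → IsUnit (v - g) → g = 0 := by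
  intro v g hv hg hc hu
  obtain ⟨e, -, hun⟩ := h v hv
  have h1 : g = e := hun g ⟨hg, hu, hc⟩
  have h2 : (0 : S) = e := hun 0 ⟨mul_zero 0, by simpa using hv, by rw [mul_zero, zero_mul]⟩
  rw [h1, ← h2]

lemma mu_core {n x g m q h f G v : S}
    (hn : n * n = 0) (hgdef : g = n * x) (hg : g * g = g)
    (hm : m = x * g) (hq : q = m * n) (hh : h = g - g * q)
    (hf : f = g * n + (m - m * q) + q) (hG : G = h + q) (hv : v = f + 1 - G) :
    G * G = G ∧ v * G = G * v ∧ v * (v - G) = 1 ∧ (v - G) * v = 1 ∧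
      G * q = q ∧ n * (q * m) = g := by
  subst hv hG hf hh hq hm hgdef
  have hn' : ∀ t : S, n * (n * t) = 0 := fun t => by rw [← mul_assoc, hn, zero_mul]
  have hg2 : n * (x * (n * x)) = n * x := by rw [← mul_assoc]; exact hg
  have hg3 : ∀ t : S, n * (x * (n * (x * t))) = n * (x * t) := by
    intro t
    have h := congrArg (fun y => y * t) hg
    simp only [mul_assoc] at h
    exact h
  refine ⟨?_, ?_, ?_, ?_, ?_, ?_⟩ <;>
  · simp only [mul_add, add_mul, mul_sub, sub_mul, mul_one, one_mul, mul_assoc,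
      mul_neg, neg_mul, sub_eq_add_neg, neg_add_rev, neg_neg,
      hn, hn', hg2, hg3, mul_zero, zero_mul, add_zero, zero_add, neg_zero]
    try abel

lemma core_nosq
    (hA : ∀ v g : S, IsUnit v → g * g = g → v * g = g * v → IsUnit (v - g) → g = 0)
    (hB : ∀ s : S, s ≠ 0 → ∃ x, (s * x) * (s * x) = s * x ∧ s * x ≠ 0) :
    ∀ n : S, n * n = 0 → n = 0 := by
  intro n hn
  by_contra hn0
  obtain ⟨x, hg, hne⟩ := hB n hn0
  obtain ⟨I1, I2, I3, I4, I5, I6⟩ := mu_core hn rfl hg rfl rfl rfl rfl rfl rfl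
  have hvu : IsUnit _ := ⟨⟨_, _, I3, I4⟩, rfl⟩
  have hvG : IsUnit _ := ⟨⟨_, _, I4, I3⟩, rfl⟩
  have hG0 := hA _ _ hvu I1 I2 hvG
  rw [hG0, zero_mul] at I5
  rw [← I5, zero_mul, mul_zero] at I6
  exact hne I6.symm

lemma idem_comm (hred : ∀ u : S, u * u = 0 → u = 0) {f : S} (hf : f * f = f) (r : S) :
    f * r = r * f := by
  have hf' : ∀ t : S, f * (f * t) = f * t := fun t => by rw [← mul_assoc, hf]
  have h1 : f * r - f * (r * f) = 0 := by
    apply hred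
    simp only [mul_sub, sub_mul, mul_assoc, hf']
    abel
  have h2 : r * f - f * (r * f) = 0 := by
    apply hred
    simp only [mul_sub, sub_mul, mul_assoc, hf']
    abel
  exact (sub_eq_zero.mp h1).trans (sub_eq_zero.mp h2).symm

lemma core_bool
    (hA : ∀ v g : S, IsUnit v → g * g = g → v * g = g * v → IsUnit (v - g) → g = 0)
    (hB : ∀ s : S, s ≠ 0 → ∃ x, (s * x) * (s * x) = s * x ∧ s * x ≠ 0) :
    ∀ a : S, a * a = a := by
  have hred := core_nosq hA hB
  intro a
  by_contra hne'
  have hbne : a - a * a ≠ 0 := fun h => hne' (sub_eq_zero.mp h).symm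
  obtain ⟨x, he, hene⟩ := hB (a - a * a) hbne
  set b : S := a - a * a with hbdef
  set e : S := b * x with hedef
  have hcomm : ∀ r : S, e * r = r * e := idem_comm hred he
  set α : S := e * a with hαdef
  set γ : S := x * e with hγdef
  set β : S := e * b with hβdef
  have hee : e * e = e := he
  have hαe : α * e = α := by
    rw [hαdef, mul_assoc, ← hcomm a, ← mul_assoc, hee]
  have heα : e * α = α := by rw [hαdef, ← mul_assoc, hee]
  have hγe : γ * e = γ := by rw [hγdef, mul_assoc, hee]
  have heγ : e * γ = γ := by rw [hγdef, ← mul_assoc, hcomm x, mul_assoc, hee]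
  have hβe : β * e = β := by rw [hβdef, mul_assoc, ← hcomm b, ← mul_assoc, hee]
  have heβ : e * β = β := by rw [hβdef, ← mul_assoc, hee]
  have hαα : α * α = e * (a * a) := by
    calc α * α = e * ((a * e) * a) := by rw [hαdef]; noncomm_ring
    _ = e * ((e * a) * a) := by rw [← hcomm a]
    _ = (e * e) * (a * a) := by noncomm_ring
    _ = e * (a * a) := by rw [hee]
  have hβα : β = α - α * α := by
    rw [hβdef, hbdef, mul_sub, hαα, hαdef]
  have hβγ : β * γ = e := by
    calc β * γ = e * ((b * x) * e) := by rw [hβdef, hγdef]; noncomm_ring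
    _ = e * (e * e) := by rw [← hedef]
    _ = e := by rw [hee, hee]
  have hγβ : γ * β = e := by
    have hpp : (γ * β) * (γ * β) = γ * β := by
      calc (γ * β) * (γ * β) = γ * ((β * γ) * β) := by noncomm_ring
      _ = γ * (e * β) := by rw [hβγ]
      _ = γ * β := by rw [heβ]
    have hep : e * (γ * β) = γ * β := by
      calc e * (γ * β) = (e * γ) * β := by noncomm_ring
      _ = γ * β := by rw [heγ]
    have hpe : (γ * β) * e = γ * β := by
      calc (γ * β) * e = γ * (β * e) := by noncomm_ring
      _ = γ * β := by rw [hβe]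
    have ht : (e - γ * β) * (e - γ * β) = e - γ * β := by
      rw [mul_sub, sub_mul, sub_mul, hee, hep, hpe, hpp]; abel
    have htβ : β * (e - γ * β) = 0 := by
      calc β * (e - γ * β) = β * e - (β * γ) * β := by noncomm_ring
      _ = β - e * β := by rw [hβe, hβγ]
      _ = 0 := by rw [heβ, sub_self]
    have htb : (e - γ * β) * β = 0 := by rw [idem_comm hred ht β]; exact htβ
    have hte : (e - γ * β) * e = e - γ * β := by rw [sub_mul, hee, hpe]
    have ht0 : e - γ * β = 0 := by
      calc e - γ * β = (e - γ * β) * (β * γ) := by rw [hβγ, hte]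
      _ = ((e - γ * β) * β) * γ := (mul_assoc _ _ _).symm
      _ = 0 := by rw [htb, zero_mul]
    have := sub_eq_zero.mp ht0
    exact this.symm
  -- first unit : v = α + (1 - e)
  set r1 : S := (e - α) * γ with hr1def
  have hαr1 : α * r1 = e := by
    calc α * r1 = (α * e - α * α) * γ := by rw [hr1def]; noncomm_ring
    _ = β * γ := by rw [hαe, ← hβα]
    _ = e := hβγ
  have hl1 : (γ * (e - α)) * α = e := by
    calc (γ * (e - α)) * α = γ * (e * α - α * α) := by noncomm_ring
    _ = γ * β := by rw [heα, ← hβα]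
    _ = e := hγβ
  have her1 : e * r1 = r1 := by
    calc e * r1 = (e * e - e * α) * γ := by rw [hr1def]; noncomm_ring
    _ = r1 := by rw [hee, heα, hr1def]
  have hr1e : r1 * e = r1 := by
    calc r1 * e = (e - α) * (γ * e) := by rw [hr1def]; noncomm_ring
    _ = r1 := by rw [hγe, hr1def]
  have hl1r1 : γ * (e - α) = r1 := by
    have hXe : (γ * (e - α)) * e = γ * (e - α) := by
      calc (γ * (e - α)) * e = γ * (e * e - α * e) := by noncomm_ring
      _ = γ * (e - α) := by rw [hee, hαe]
    calc γ * (e - α) = (γ * (e - α)) * (α * r1) := by rw [hαr1, hXe]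
    _ = ((γ * (e - α)) * α) * r1 := by noncomm_ring
    _ = e * r1 := by rw [hl1]
    _ = r1 := her1
  have hr1α : r1 * α = e := by rw [← hl1r1]; exact hl1
  have e3 : ((1 : S) - e) * (1 - e) = 1 - e := by
    have hx : ((1 : S) - e) * (1 - e) = 1 - e - e + e * e := by noncomm_ring
    rw [hx, hee]; abel
  have hv1 : (α + (1 - e)) * (r1 + (1 - e)) = 1 := by
    have e1 : α * (1 - e) = 0 := by rw [mul_sub, mul_one, hαe, sub_self]
    have e2 : (1 - e) * r1 = 0 := by rw [sub_mul, one_mul, her1, sub_self]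
    calc (α + (1 - e)) * (r1 + (1 - e))
        = α * r1 + α * (1 - e) + ((1 - e) * r1 + (1 - e) * (1 - e)) := by noncomm_ring
    _ = 1 := by rw [hαr1, e1, e2, e3]; abel
  have hv2 : (r1 + (1 - e)) * (α + (1 - e)) = 1 := by
    have e1 : (1 - e) * α = 0 := by rw [sub_mul, one_mul, heα, sub_self]
    have e2 : r1 * (1 - e) = 0 := by rw [mul_sub, mul_one, hr1e, sub_self]
    calc (r1 + (1 - e)) * (α + (1 - e))
        = r1 * α + r1 * (1 - e) + ((1 - e) * α + (1 - e) * (1 - e)) := by noncomm_ring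
    _ = 1 := by rw [hr1α, e1, e2, e3]; abel
  have hvunit : IsUnit (α + (1 - e)) := ⟨⟨_, _, hv1, hv2⟩, rfl⟩
  have hcommv : (α + (1 - e)) * e = e * (α + (1 - e)) := by
    have c1 : (α + (1 - e)) * e = α * e + (e - e * e) := by noncomm_ring
    have c2 : e * (α + (1 - e)) = e * α + (e - e * e) := by noncomm_ring
    rw [c1, c2, hαe, heα]
  -- second unit : v - e
  set r2 : S := α * γ with hr2def
  have h21 : (e - α) * r2 = e := by
    calc (e - α) * r2 = (e * α - α * α) * γ := by rw [hr2def]; noncomm_ring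
    _ = β * γ := by rw [heα, ← hβα]
    _ = e := hβγ
  have h22 : (γ * α) * (e - α) = e := by
    calc (γ * α) * (e - α) = γ * (α * e - α * α) := by noncomm_ring
    _ = γ * β := by rw [hαe, ← hβα]
    _ = e := hγβ
  have her2 : e * r2 = r2 := by
    calc e * r2 = (e * α) * γ := by rw [hr2def]; noncomm_ring
    _ = r2 := by rw [heα, hr2def]
  have hr2e : r2 * e = r2 := by
    calc r2 * e = α * (γ * e) := by rw [hr2def]; noncomm_ring
    _ = r2 := by rw [hγe, hr2def]
  have hl2r2 : γ * α = r2 := by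
    have hXe : (γ * α) * e = γ * α := by rw [mul_assoc, hαe]
    calc γ * α = (γ * α) * ((e - α) * r2) := by rw [h21, hXe]
    _ = ((γ * α) * (e - α)) * r2 := by noncomm_ring
    _ = e * r2 := by rw [h22]
    _ = r2 := her2
  have hr2' : r2 * (e - α) = e := by rw [← hl2r2]; exact h22
  have hw1 : ((α - e) + (1 - e)) * (-r2 + (1 - e)) = 1 := by
    have e1 : (α - e) * (1 - e) = 0 := by
      calc (α - e) * (1 - e) = α - α * e - (e - e * e) := by noncomm_ring
      _ = 0 := by rw [hαe, hee]; abel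
    have e2 : (1 - e) * r2 = 0 := by rw [sub_mul, one_mul, her2, sub_self]
    have e4 : (α - e) * r2 = -e := by
      have h' : (α - e) * r2 = -((e - α) * r2) := by noncomm_ring
      rw [h', h21]
    calc ((α - e) + (1 - e)) * (-r2 + (1 - e))
        = -((α - e) * r2) + (α - e) * (1 - e) + (-((1 - e) * r2) + (1 - e) * (1 - e)) := by
          noncomm_ring
    _ = 1 := by rw [e4, e1, e2, e3]; abel
  have hw2 : (-r2 + (1 - e)) * ((α - e) + (1 - e)) = 1 := by
    have e1 : (1 - e) * (α - e) = 0 := by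
      calc (1 - e) * (α - e) = α - e * α - (e - e * e) := by noncomm_ring
      _ = 0 := by rw [heα, hee]; abel
    have e2 : r2 * (1 - e) = 0 := by rw [mul_sub, mul_one, hr2e, sub_self]
    have e4 : r2 * (α - e) = -e := by
      have h' : r2 * (α - e) = -(r2 * (e - α)) := by noncomm_ring
      rw [h', hr2']
    calc (-r2 + (1 - e)) * ((α - e) + (1 - e))
        = -(r2 * (α - e)) + -(r2 * (1 - e)) + ((1 - e) * (α - e) + (1 - e) * (1 - e)) := by
          noncomm_ring
    _ = 1 := by rw [e4, e1, e2, e3]; abel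
  have hwunit : IsUnit ((α + (1 - e)) - e) := by
    have hrw : (α + (1 - e)) - e = (α - e) + (1 - e) := by abel
    rw [hrw]
    exact ⟨⟨_, _, hw1, hw2⟩, rfl⟩
  exact hene (hA (α + (1 - e)) e hvunit hee hcommv hwunit)

lemma bool_uusc (hbool : ∀ s : S, s * s = s) : IsUUSC S := by
  intro a ha
  have unit_one : ∀ u : S, IsUnit u → u = 1 := by
    intro u hu
    obtain ⟨U, hU⟩ := hu
    have hui : u * ↑U⁻¹ = 1 := by rw [← hU]; exact U.mul_inv
    calc u = u * (u * ↑U⁻¹) := by rw [hui, mul_one]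
    _ = (u * u) * ↑U⁻¹ := by rw [mul_assoc]
    _ = u * ↑U⁻¹ := by rw [hbool u]
    _ = 1 := hui
  refine ⟨0, ⟨mul_zero 0, by simpa using ha, by rw [mul_zero, zero_mul]⟩, ?_⟩
  intro y hy
  obtain ⟨hyi, hyu, hyc⟩ := hy
  have h2 : a - y = 1 := unit_one _ hyu
  rw [unit_one a ha] at h2
  exact sub_eq_self.mp h2

end Core

section Glue

variable {R : Type*} [Ring R]

lemma quot_hB (hsp : Semipotent R) :
    ∀ s : JacQuot R, s ≠ 0 → ∃ x, (s * x) * (s * x) = s * x ∧ s * x ≠ 0 := by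
  intro s hs
  obtain ⟨a, ha⟩ := Quotient.exists_rep s
  have ha' : (a : JacQuot R) = s := ha
  have haJ : a ∉ jacobsonRad R := by
    intro h
    exact hs (by rw [← ha', (quot_zero_iff a).mpr h])
  have hInotsub : ¬ ((Submodule.span Rᵐᵒᵖ {a} : Submodule Rᵐᵒᵖ R) : Set R) ⊆
      (jacobsonRad R : Set R) :=
    fun hsub => haJ (hsub (Submodule.mem_span_singleton_self a))
  obtain ⟨e, heI, hene, heid⟩ := hsp.2 _ hInotsub
  obtain ⟨c, hc⟩ := Submodule.mem_span_singleton.mp heI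
  have hc' : a * c.unop = e := by rw [← hc]; rfl
  have heid' : e * e = e := heid
  refine ⟨(c.unop : R), ?_, ?_⟩
  · have h1 : s * (c.unop : R) = (e : JacQuot R) := by
      rw [← ha', ← RingCon.coe_mul, hc']
    rw [h1, ← RingCon.coe_mul, heid']
  · intro h0
    have h1 : s * (c.unop : R) = (e : JacQuot R) := by
      rw [← ha', ← RingCon.coe_mul, hc']
    rw [h1] at h0
    exact hene (jac_idem_zero heid' ((quot_zero_iff e).mp h0))

lemma quot_bool_mem {a : R} (hbool : ∀ s : JacQuot R, IsIdempotentElem s) :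
    a - a ^ 2 ∈ jacobsonRad R := by
  have hb : ((a : JacQuot R)) * a = a := hbool (a : JacQuot R)
  have hb' : ((a * a : R) : JacQuot R) = ((a : R) : JacQuot R) := by
    rw [RingCon.coe_mul]; exact hb
  have h1 : (jacobsonRad R).ringCon (a * a) a := (jacobsonRad R).ringCon.eq.mp hb'
  have h2 : a * a - a ∈ jacobsonRad R := (TwoSidedIdeal.rel_iff _ _ _).mp h1
  have h3 : a - a ^ 2 = -(a * a - a) := by noncomm_ring
  rw [h3]
  exact TwoSidedIdeal.neg_mem _ h2

lemma semipot_of_bool (hbool : ∀ s : JacQuot R, IsIdempotentElem s)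
    (hlift : IdempotentsLiftJac R) : Semipotent R := by
  constructor
  · -- left ideals
    intro I hI
    obtain ⟨a, haI, haJ⟩ := Set.not_subset.mp hI
    obtain ⟨f, hfid, hfj⟩ := hlift a (quot_bool_mem hbool)
    have hf : f * f = f := hfid
    have hjJ : a - f ∈ jacobsonRad R := hfj
    have hu1 : (1 : R) - f - a + 2 * (f * a) = 1 + (-(a - f) + 2 * (f * (a - f))) := by
      have hexp : f * (a - f) = f * a - f * f := by rw [mul_sub]
      rw [hexp, hf]
      noncomm_ring
    have huunit : IsUnit ((1 : R) - f - a + 2 * (f * a)) := by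
      rw [hu1]
      exact jac_unit (TwoSidedIdeal.add_mem _ (TwoSidedIdeal.neg_mem _ hjJ)
        (TwoSidedIdeal.mul_mem_left _ _ _ (TwoSidedIdeal.mul_mem_left _ _ _ hjJ)))
    obtain ⟨U, hU⟩ := huunit
    set u : R := (1 : R) - f - a + 2 * (f * a) with hudef
    have huU : u * ↑U⁻¹ = 1 := by rw [← hU]; exact U.mul_inv
    have hfu : f * u = f * a := by
      have hexp : f * ((1 : R) - f - a + 2 * (f * a)) =
          f - f * f - f * a + 2 * ((f * f) * a) := by noncomm_ring
      rw [hudef, hexp, hf]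
      noncomm_ring
    refine ⟨↑U⁻¹ * (f * u), ?_, ?_, ?_⟩
    · rw [hfu, ← mul_assoc]
      exact I.mul_mem_left _ haI
    · intro h0
      have hffromu : f = (u * ↑U⁻¹) * (f * (u * ↑U⁻¹)) := by rw [huU]; simp
      have hf0 : f = 0 := by
        rw [hffromu]
        calc (u * ↑U⁻¹) * (f * (u * ↑U⁻¹)) = u * (↑U⁻¹ * (f * u)) * ↑U⁻¹ := by noncomm_ring
        _ = 0 := by rw [h0]; simp
      apply haJ
      rw [hf0, sub_zero] at hjJ
      exact hjJ
    · show (↑U⁻¹ * (f * u)) * (↑U⁻¹ * (f * u)) = ↑U⁻¹ * (f * u)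
      calc (↑U⁻¹ * (f * u)) * (↑U⁻¹ * (f * u))
          = ↑U⁻¹ * ((f * (u * ↑U⁻¹)) * (f * u)) := by noncomm_ring
      _ = ↑U⁻¹ * ((f * 1) * (f * u)) := by rw [huU]
      _ = ↑U⁻¹ * ((f * f) * u) := by noncomm_ring
      _ = ↑U⁻¹ * (f * u) := by rw [hf]
  · -- right ideals
    intro I hI
    obtain ⟨a, haI, haJ⟩ := Set.not_subset.mp hI
    obtain ⟨f, hfid, hfj⟩ := hlift a (quot_bool_mem hbool)
    have hf : f * f = f := hfid
    have hjJ : a - f ∈ jacobsonRad R := hfj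
    have hu1 : (1 : R) - f - a + 2 * (a * f) = 1 + (-(a - f) + 2 * ((a - f) * f)) := by
      have hexp : (a - f) * f = a * f - f * f := by rw [sub_mul]
      rw [hexp, hf]
      noncomm_ring
    have huunit : IsUnit ((1 : R) - f - a + 2 * (a * f)) := by
      rw [hu1]
      exact jac_unit (TwoSidedIdeal.add_mem _ (TwoSidedIdeal.neg_mem _ hjJ)
        (TwoSidedIdeal.mul_mem_left _ _ _ (TwoSidedIdeal.mul_mem_right _ _ _ hjJ)))
    obtain ⟨U, hU⟩ := huunit
    set u : R := (1 : R) - f - a + 2 * (a * f) with hudef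
    have huU : ↑U⁻¹ * u = 1 := by rw [← hU]; exact U.inv_mul
    have hfu : u * f = a * f := by
      have hexp : ((1 : R) - f - a + 2 * (a * f)) * f =
          f - f * f - a * f + 2 * (a * (f * f)) := by noncomm_ring
      rw [hudef, hexp, hf]
      noncomm_ring
    refine ⟨(u * f) * ↑U⁻¹, ?_, ?_, ?_⟩
    · rw [hfu, mul_assoc]
      have : a * (f * ↑U⁻¹) = (MulOpposite.op (f * ↑U⁻¹)) • a := rfl
      rw [this]
      exact I.smul_mem _ haI
    · intro h0
      have hf0 : f = 0 := by
        have hffromu : f = (↑U⁻¹ * u) * (f * (↑U⁻¹ * u)) := by rw [huU]; simp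
        rw [hffromu]
        calc (↑U⁻¹ * u) * (f * (↑U⁻¹ * u)) = ↑U⁻¹ * ((u * f) * ↑U⁻¹) * u := by noncomm_ring
        _ = 0 := by rw [h0]; simp
      apply haJ
      rw [hf0, sub_zero] at hjJ
      exact hjJ
    · show ((u * f) * ↑U⁻¹) * ((u * f) * ↑U⁻¹) = (u * f) * ↑U⁻¹
      calc ((u * f) * ↑U⁻¹) * ((u * f) * ↑U⁻¹)
          = u * ((f * (↑U⁻¹ * u)) * (f * ↑U⁻¹)) := by noncomm_ring
      _ = u * ((f * 1) * (f * ↑U⁻¹)) := by rw [huU]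
      _ = u * ((f * f) * ↑U⁻¹) := by noncomm_ring
      _ = (u * f) * ↑U⁻¹ := by rw [hf]; noncomm_ring
  
end Glue

/-- Corollary 3.9: `R` is semi-boolean (i.e. `R/J(R)` is Boolean and idempotents lift
modulo `J(R)`) iff `R` is potent and `R/J(R)` is UUSC. -/
theorem stmt_17 (R : Type*) [Ring R] :
    ((∀ a : JacQuot R, IsIdempotentElem a) ∧ IdempotentsLiftJac R) ↔
      (Potent R ∧ IsUUSC (JacQuot R)) := by
  constructor
  · rintro ⟨hbool, hlift⟩
    exact ⟨⟨semipot_of_bool hbool hlift, hlift⟩, bool_uusc fun s => hbool s⟩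
  · rintro ⟨⟨hsp, hlift⟩, huusc⟩
    refine ⟨?_, hlift⟩
    intro s
    exact core_bool (uusc_hA huusc) (quot_hB hsp) s
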